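/- Fix a Markov policy π. For each h ∈ [H] and s ∈ 𝒮, define the A×A matrix W^π_{h,s} whose every column equals the vector (π_h(a|s))_{a∈𝒜}, and let W^π ∈ ℝ^{SAH×SAH} be the block-diagonal matrix of the W^π_{h,s}. Define the steering reward R_π(μ) := −μᵀ(W^π − I)ᵀ(W^π − I) for μ ∈ ℝ^{SAH}. Then for any feasible occupancy measures μ and for the occupancy measure μ^π of policy π in the same model, one has ⟨R_π(μ), μ^π − μ⟩ = ‖(W^π − I)μ‖₂² = Σ_{h,s,a} (μ_h(s))² |π_h(a|s) − π̄_h(a|s)|², where μ_h(s) = Σ_a μ_h(s,a) and π̄_h(a|s) = μ_h(s,a)/μ_h(s) whenever μ_h(s) > 0 (and π̄_h(·|s) arbitrary, e.g., uniform, otherwise). -/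
import Mathlib


open Finset

def IsPolicy {S A : Type*} [Fintype A] (π : ℕ → S → A → ℝ) : Prop :=
  ∀ h s, (∀ a, 0 ≤ π h s a) ∧ ∑ a, π h s a = 1

def IsKernel {S A : Type*} [Fintype S] (P : ℕ → S → A → S → ℝ) : Prop :=
  ∀ h s a, (∀ s', 0 ≤ P h s a s') ∧ ∑ s', P h s a s' = 1

def IsProb {S : Type*} [Fintype S] (μ₁ : S → ℝ) : Prop :=
  (∀ s, 0 ≤ μ₁ s) ∧ ∑ s, μ₁ s = 1

noncomputable def occ {S A : Type*} [Fintype S] [Fintype A] (μ₁ : S → ℝ)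
    (P : ℕ → S → A → S → ℝ) (π : ℕ → S → A → ℝ) : ℕ → S → A → ℝ
  | 0 => fun s a => μ₁ s * π 0 s a
  | (h+1) => fun s a => π (h+1) s a * ∑ s', ∑ a', P h s' a' s * occ μ₁ P π h s' a'


/-- Coordinate formula for the steering reward `R_π(μ) = −μᵀ(W^π−I)ᵀ(W^π−I)`:
`(R_π(μ))_{h,s,a} = −Σ_{a'} (π_h(a'|s)μ_h(s) − μ_h(s,a'))(π_h(a'|s) − 1{a'=a})`. -/
noncomputable def Rpi {S A : Type*} [Fintype A] [DecidableEq A]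
    (π : ℕ → S → A → ℝ) (μ : ℕ → S → A → ℝ) (h : ℕ) (s : S) (a : A) : ℝ :=
  - ∑ a', (π h s a' * (∑ b, μ h s b) - μ h s a') * (π h s a' - if a' = a then 1 else 0)

/-- The policy induced by a density `μ`: `π̄_h(a|s) = μ_h(s,a)/μ_h(s)` (uniform if `μ_h(s)=0`). -/
noncomputable def pibar {S A : Type*} [Fintype A] (μ : ℕ → S → A → ℝ) :
    ℕ → S → A → ℝ :=
  fun h s a => if (∑ b, μ h s b) = 0 then 1 / (Fintype.card A : ℝ) else μ h s a / (∑ b, μ h s b)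

lemma occ_nonneg {S A : Type*} [Fintype S] [Fintype A] (μ₁ : S → ℝ) (hμ₁ : IsProb μ₁)
    (P : ℕ → S → A → S → ℝ) (hP : IsKernel P) (ρ : ℕ → S → A → ℝ) (hρ : IsPolicy ρ) :
    ∀ h s a, 0 ≤ occ μ₁ P ρ h s a := by
  intro h
  induction h with
  | zero => exact fun s a => mul_nonneg (hμ₁.1 s) ((hρ 0 s).1 a)
  | succ h ih =>
    intro s a
    simp only [occ]
    refine mul_nonneg ((hρ _ _).1 a) (Finset.sum_nonneg fun s' _ =>
      Finset.sum_nonneg fun a' _ => mul_nonneg ((hP h s' a').1 s) (ih s' a'))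

lemma occ_self {S A : Type*} [Fintype S] [Fintype A] (μ₁ : S → ℝ)
    (P : ℕ → S → A → S → ℝ) (π : ℕ → S → A → ℝ) (hπ : IsPolicy π) :
    ∀ h s a, occ μ₁ P π h s a = π h s a * ∑ b, occ μ₁ P π h s b := by
  intro h s a
  cases h with
  | zero =>
    simp only [occ, ← Finset.mul_sum]
    rw [(hπ 0 s).2, mul_one]
    ring
  | succ h =>
    simp only [occ]
    rw [← Finset.sum_mul, (hπ (h+1) s).2, one_mul]

lemma key1 {A : Type*} [Fintype A] [DecidableEq A] (p m n : A → ℝ)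
    (hn : ∀ a, n a = p a * ∑ b, n b) :
    ∑ a, (- ∑ a', (p a' * (∑ b, m b) - m a') * (p a' - if a' = a then 1 else 0)) * (n a - m a)
      = ∑ a, (p a * (∑ b, m b) - m a) ^ 2 := by
  set M := ∑ b, m b with hM
  set N := ∑ b, n b with hN
  set v : A → ℝ := fun a => p a * M - m a with hv
  set c : ℝ := ∑ a', v a' * p a' with hc
  have hR : ∀ a : A, (- ∑ a', v a' * (p a' - if a' = a then 1 else 0)) = v a - c := by
    intro a
    have h1 : ∑ a', v a' * (p a' - if a' = a then 1 else 0)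
        = (∑ a', v a' * p a') - ∑ a', (if a' = a then v a' else 0) := by
      rw [← Finset.sum_sub_distrib]
      refine Finset.sum_congr rfl fun a' _ => by
        by_cases h : a' = a <;> simp [h] <;> ring
    rw [h1, Finset.sum_ite_eq' Finset.univ a (fun a' => v a') ]
    simp [hc]
  have hkey : ∑ a, ((v a - c) * (n a - m a) - v a ^ 2) = 0 := by
    have step : ∀ a : A, (v a - c) * (n a - m a) - v a ^ 2
        = v a * p a * (N - M) - c * (n a - m a) := by
      intro a
      rw [hn a]
      simp only [hv]
      ring
    rw [Finset.sum_congr rfl fun a _ => step a, Finset.sum_sub_distrib]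
    have e1 : ∑ a, v a * p a * (N - M) = c * (N - M) := by
      rw [← Finset.sum_mul, hc]
    have e2 : ∑ a, c * (n a - m a) = c * (N - M) := by
      rw [← Finset.mul_sum, Finset.sum_sub_distrib, ← hN, ← hM]
    rw [e1, e2, sub_self]
  have := Finset.sum_sub_distrib (s := (Finset.univ : Finset A))
    (f := fun a => (v a - c) * (n a - m a)) (g := fun a => v a ^ 2)
  rw [this] at hkey
  have hsum : ∑ a, (v a - c) * (n a - m a) = ∑ a, v a ^ 2 := by linarith
  calc ∑ a, (- ∑ a', v a' * (p a' - if a' = a then 1 else 0)) * (n a - m a)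
      = ∑ a, (v a - c) * (n a - m a) := Finset.sum_congr rfl fun a _ => by rw [hR a]
    _ = ∑ a, v a ^ 2 := hsum

lemma key2 {A : Type*} [Fintype A] (p m : A → ℝ) (hm : ∀ a, 0 ≤ m a) (a : A) :
    (p a * (∑ b, m b) - m a) ^ 2
      = (∑ b, m b) ^ 2 * (p a - if (∑ b, m b) = 0 then 1 / (Fintype.card A : ℝ)
          else m a / (∑ b, m b)) ^ 2 := by
  by_cases hM : (∑ b, m b) = 0
  · have hz : m a = 0 :=
      (Finset.sum_eq_zero_iff_of_nonneg (fun b _ => hm b)).1 hM a (Finset.mem_univ a)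
    simp [hM, hz]
  · rw [if_neg hM]
    field_simp

/-- for any feasible occupancy measure μ (induced by some policy ρ) and any
policy π, `⟨R_π(μ), μ^π − μ⟩ = ‖(W^π − I)μ‖₂² = Σ_{h,s,a} (μ_h(s))² |π_h(a|s) − π̄_h(a|s)|²`. -/
theorem stmt3 {S A : Type*} [Fintype S] [Fintype A] [DecidableEq A]
    (H : ℕ) (μ₁ : S → ℝ) (hμ₁ : IsProb μ₁)
    (P : ℕ → S → A → S → ℝ) (hP : IsKernel P)
    (π ρ : ℕ → S → A → ℝ) (hπ : IsPolicy π) (hρ : IsPolicy ρ)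
    (μ : ℕ → S → A → ℝ) (hμ : μ = occ μ₁ P ρ) :
    (∑ h ∈ Finset.range H, ∑ s, ∑ a,
        Rpi π μ h s a * (occ μ₁ P π h s a - μ h s a)
      = ∑ h ∈ Finset.range H, ∑ s, ∑ a,
          (π h s a * (∑ b, μ h s b) - μ h s a) ^ 2) ∧
    (∑ h ∈ Finset.range H, ∑ s, ∑ a,
        (π h s a * (∑ b, μ h s b) - μ h s a) ^ 2
      = ∑ h ∈ Finset.range H, ∑ s, ∑ a,
          (∑ b, μ h s b) ^ 2 * (π h s a - pibar μ h s a) ^ 2) := by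
  constructor
  · refine Finset.sum_congr rfl fun h _ => Finset.sum_congr rfl fun s _ => ?_
    exact key1 (π h s) (μ h s) (occ μ₁ P π h s)
      (fun a => occ_self μ₁ P π hπ h s a)
  · refine Finset.sum_congr rfl fun h _ => Finset.sum_congr rfl fun s _ =>
      Finset.sum_congr rfl fun a _ => ?_
    have hm : ∀ b, 0 ≤ μ h s b := by
      intro b; rw [hμ]; exact occ_nonneg μ₁ hμ₁ P hP ρ hρ h s b
    exact key2 (π h s) (μ h s) hm a
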